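/- For a real n×n matrix A whose kernel has dimension at least n−1, the characteristic polynomial of A equals X^(n−1) · (X − trace A); in particular if trace A = 0 then the characteristic polynomial is Xⁿ. -/

import Mathlib

open Polynomial in
theorem stmt_8 (n : ℕ) (hn : 1 ≤ n) (A : Matrix (Fin n) (Fin n) ℝ)
    (hker : n - 1 ≤ Module.finrank ℝ (LinearMap.ker A.mulVecLin)) :
    A.charpoly = X ^ (n - 1) * (X - C A.trace) ∧
      (A.trace = 0 → A.charpoly = X ^ n) := by
  set f := A.mulVecLin with hf
  set K := LinearMap.ker f with hK
  -- a linearly independent family of n-1 vectors in the kernel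
  set m := n - 1 with hm
  have hmn : m + 1 = n := Nat.succ_pred_eq_of_pos hn
  have hfinM : Module.finrank ℝ (Fin n → ℝ) = n := by simp
  let bK : Module.Basis (Fin (Module.finrank ℝ K)) ℝ K := Module.finBasis ℝ K
  let v : Fin m → (Fin n → ℝ) := fun i => (bK (Fin.castLE hker i) : Fin n → ℝ)
  have hvK : ∀ i, v i ∈ K := fun i => (bK (Fin.castLE hker i)).2
  have hvli : LinearIndependent ℝ v := by
    have h1 : LinearIndependent ℝ (fun i => bK (Fin.castLE hker i)) :=
      bK.linearIndependent.comp _ (Fin.castLE_injective hker)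
    exact h1.map' K.subtype K.ker_subtype
  -- a vector outside the span
  obtain ⟨x, hx⟩ : ∃ x, x ∉ Submodule.span ℝ (Set.range v) := by
    by_contra h
    push_neg at h
    have htop : Submodule.span ℝ (Set.range v) = ⊤ := by
      exact Submodule.eq_top_iff'.2 h
    have := finrank_span_eq_card hvli
    rw [htop, finrank_top, hfinM, Fintype.card_fin] at this
    omega
  have hwli : LinearIndependent ℝ (Fin.snoc v x : Fin (m + 1) → (Fin n → ℝ)) :=
    linearIndependent_fin_snoc.2 ⟨hvli, hx⟩
  have hcard : Fintype.card (Fin (m + 1)) = Module.finrank ℝ (Fin n → ℝ) := by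
    simp [hmn]
  let b : Module.Basis (Fin (m + 1)) ℝ (Fin n → ℝ) :=
    basisOfLinearIndependentOfCardEqFinrank hwli hcard
  have hb : ∀ i, b i = (Fin.snoc v x : Fin (m + 1) → Fin n → ℝ) i := fun i =>
    congrFun (coe_basisOfLinearIndependentOfCardEqFinrank hwli hcard) i
  have hbker : ∀ i : Fin (m + 1), i ≠ Fin.last m → f (b i) = 0 := by
    intro i hi
    obtain ⟨j, rfl⟩ := Fin.exists_castSucc_eq.2 hi
    have : b j.castSucc = v j := by rw [hb]; simp
    rw [this]
    exact (LinearMap.mem_ker).1 (hvK j)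
  set B := LinearMap.toMatrix b b f with hB
  have hBcol : ∀ (i j : Fin (m + 1)), j ≠ Fin.last m → B i j = 0 := by
    intro i j hj
    rw [hB, LinearMap.toMatrix_apply, hbker j hj]
    simp
  have hBtri : B.BlockTriangular _root_.id := by
    intro i j hij
    simp only [_root_.id] at hij
    apply hBcol
    intro hj
    rw [hj] at hij
    exact absurd hij (not_lt.2 (Fin.le_last i))
  -- charpoly computation
  have hA : LinearMap.toMatrix (Pi.basisFun ℝ (Fin n)) (Pi.basisFun ℝ (Fin n)) f = A := by
    rw [LinearMap.toMatrix_eq_toMatrix', hf, ← Matrix.toLin'_apply', LinearMap.toMatrix'_toLin']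
  have hchar : A.charpoly = f.charpoly := by
    rw [← LinearMap.charpoly_toMatrix f (Pi.basisFun ℝ (Fin n)), hA]
  have hcharB : A.charpoly = B.charpoly := by
    rw [hchar, ← LinearMap.charpoly_toMatrix f b]
  have htr : A.trace = B (Fin.last m) (Fin.last m) := by
    have h1 : A.trace = LinearMap.trace ℝ _ f := by
      rw [LinearMap.trace_eq_matrix_trace ℝ (Pi.basisFun ℝ (Fin n)) f, hA]
    rw [h1, LinearMap.trace_eq_matrix_trace ℝ b f, ← hB, Matrix.trace]
    rw [Fin.sum_univ_castSucc]
    have h2 : ∀ j : Fin m, Matrix.diag B j.castSucc = 0 := fun j =>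
      hBcol _ _ (Fin.castSucc_lt_last j).ne
    rw [Finset.sum_congr rfl (fun j _ => h2 j)]
    simp [Matrix.diag]
  have hmain : A.charpoly = X ^ m * (X - C A.trace) := by
    rw [hcharB, Matrix.charpoly_of_upperTriangular B hBtri, Fin.prod_univ_castSucc]
    have h1 : ∀ j : Fin m, B j.castSucc j.castSucc = 0 := fun j =>
      hBcol _ _ (Fin.castSucc_lt_last j).ne
    rw [Finset.prod_congr rfl (fun j _ => by rw [h1 j, map_zero, sub_zero])]
    rw [Finset.prod_const, Finset.card_univ, Fintype.card_fin, htr]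
  refine ⟨hmain, fun h0 => ?_⟩
  rw [hmain, h0, map_zero, sub_zero, ← pow_succ, hmn]
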